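/- Fix α ∈ (-1,1). The function d(x) = (x^((α-1)/2) - 1)/(1 - x), defined for x > 0, x ≠ 1, is nonincreasing on (0,1) ∪ (1,∞). Equivalently, for 0 < x < 1 its derivative satisfies d'(x) ≤ 0, since 1 - ((3-α)/2)·x^((α-1)/2) + ((1-α)/2)·x^((α-3)/2) ≥ 0 for all x > 0. -/

import Mathlib

open Set

private lemma convexOn_rpow_neg {p : ℝ} (hp : p < 0) :
    ConvexOn ℝ (Ioi (0:ℝ)) (fun x : ℝ => x ^ p) := by
  have hint : interior (Ioi (0:ℝ)) = Ioi 0 := interior_Ioi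
  refine convexOn_of_hasDerivWithinAt2_nonneg (convex_Ioi 0)
    (f' := fun x => p * x ^ (p - 1)) (f'' := fun x => p * (p - 1) * x ^ (p - 2))
    ?_ ?_ ?_ ?_
  · intro x hx
    exact (Real.continuousAt_rpow_const x p (Or.inl (ne_of_gt hx))).continuousWithinAt
  · intro x hx
    rw [hint] at hx ⊢
    exact (Real.hasDerivAt_rpow_const (Or.inl (ne_of_gt hx))).hasDerivWithinAt
  · intro x hx
    rw [hint] at hx ⊢
    have h := (Real.hasDerivAt_rpow_const (p := p - 1) (Or.inl (ne_of_gt hx))).const_mul p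
    have h2 : HasDerivAt (fun y : ℝ => p * y ^ (p - 1)) (p * (p - 1) * x ^ (p - 2)) x := by
      rw [show p * (p - 1) * x ^ (p - 2) = p * ((p - 1) * x ^ (p - 1 - 1)) from by
        rw [show p - 1 - 1 = p - 2 from by ring]; ring]
      exact h
    exact h2.hasDerivWithinAt
  · intro x hx
    rw [hint] at hx
    have h1 : (0:ℝ) ≤ x ^ (p - 2) := Real.rpow_nonneg (le_of_lt hx) _
    have h2 : (0:ℝ) < p * (p - 1) := mul_pos_of_neg_of_neg hp (by linarith)
    exact mul_nonneg h2.le h1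
theorem stmt_6 (α : ℝ) (hα : α ∈ Set.Ioo (-1:ℝ) 1)
    (d : ℝ → ℝ) (hd : ∀ x, d x = (x ^ ((α - 1)/2) - 1) / (1 - x)) :
    (∀ x > (0:ℝ),
      0 ≤ 1 - ((3 - α)/2) * x ^ ((α - 1)/2) + ((1 - α)/2) * x ^ ((α - 3)/2)) ∧
    AntitoneOn d (Set.Ioi (0:ℝ) \ {1}) := by
  set p : ℝ := (α - 1)/2 with hp
  have hp0 : p < 0 := by rw [hp]; linarith [hα.2]
  have hconv : ConvexOn ℝ (Ioi (0:ℝ)) (fun x : ℝ => x ^ p) := convexOn_rpow_neg hp0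
  have hexp : (α - 3)/2 = p - 1 := by rw [hp]; ring
  have h1mem : (1:ℝ) ∈ Ioi (0:ℝ) := by norm_num
  constructor
  · -- part 1: tangent line inequality for the convex function x ↦ x ^ p at the point 1
    intro x hx
    have hx' : x ≠ 0 := ne_of_gt hx
    have hxpx : x ^ (p - 1) * x = x ^ p := by
      rw [← Real.rpow_add_one hx']; norm_num
    have h31 : (3 - α)/2 = 1 - p := by rw [hp]; ring
    have h11 : (1 - α)/2 = -p := by rw [hp]; ring
    rw [hexp, h31, h11, ← hxpx]
    have hg1 : (1:ℝ) ^ p = 1 := Real.one_rpow p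
    have hderiv : HasDerivAt (fun x : ℝ => x ^ p) (p * x ^ (p - 1)) x :=
      Real.hasDerivAt_rpow_const (Or.inl hx')
    rcases lt_trichotomy x 1 with hlt | heq | hgt
    · have h := hconv.le_slope_of_hasDerivAt (mem_Ioi.mpr hx) h1mem hlt hderiv
      rw [slope_def_field, hg1, le_div_iff₀ (by linarith : (0:ℝ) < 1 - x)] at h
      rw [← hxpx] at h
      nlinarith [h]
    · subst heq
      norm_num [Real.one_rpow]
    · have h := hconv.slope_le_of_hasDerivAt h1mem (mem_Ioi.mpr hx) hgt hderiv
      rw [slope_def_field, hg1, div_le_iff₀ (by linarith : (0:ℝ) < x - 1)] at h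
      rw [← hxpx] at h
      nlinarith [h]
  · -- part 2: d is (up to sign) the slope of a convex function from the point 1
    have hmono := hconv.slope_mono h1mem
    intro a ha b hb hab
    have key : ∀ y : ℝ, d y = -(slope (fun x : ℝ => x ^ p) 1 y) := by
      intro y
      rw [hd, slope_def_field, Real.one_rpow,
        show (1:ℝ) - y = -(y - 1) from by ring, div_neg]
    rw [key a, key b, neg_le_neg_iff]
    exact hmono ha hb hab
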